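/- arXiv:2409.05070 — 3 statements merged into one kernel-verified Lean document; each statement's English description precedes it below -/
import Mathlib

section
/- Let H and K be real separable Hilbert spaces, A : H → H a positive bounded linear operator, V : K → H a partial isometry, and B : K → K a bounded linear operator. Then for all exponents 0 ≤ r ≤ 1/2 and 0 ≤ s ≤ 1/2 one has ‖A^r V B V^* A^s‖ ≤ ‖(V^* A V)^r B (V^* A V)^s‖. -/
open ContinuousLinearMap

/-- `p` is the family of real powers `t ↦ A ^ t` (for `t ≥ 0`) of the positive operator `A`,
given by the continuous functional calculus; it is characterized by the semigroup property
together with positivity, continuity, `p 0 = 1` and `p 1 = A`. -/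
def IsPowerFamilyOf {E : Type*} [NormedAddCommGroup E] [InnerProductSpace ℝ E]
    [CompleteSpace E] (A : E →L[ℝ] E) (p : ℝ → E →L[ℝ] E) : Prop :=
  p 0 = 1 ∧ p 1 = A ∧ (∀ s t : ℝ, 0 ≤ s → 0 ≤ t → p (s + t) = p s ∘L p t) ∧
    (∀ t : ℝ, 0 ≤ t → (p t).IsPositive) ∧ ContinuousOn p (Set.Ici (0 : ℝ))

section Aux
variable {E : Type*} [NormedAddCommGroup E] [InnerProductSpace ℝ E] [CompleteSpace E]

/-- For a self-adjoint operator, `‖P * P‖ = ‖P‖ * ‖P‖`. -/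
lemma sa_norm_mul_self {P : E →L[ℝ] E} (hP : IsSelfAdjoint P) :
    ‖P * P‖ = ‖P‖ * ‖P‖ := by
  have h : adjoint P = P := hP
  calc ‖P * P‖ = ‖adjoint P ∘L P‖ := by rw [h]; rfl
    _ = ‖P‖ * ‖P‖ := norm_adjoint_comp_self P

lemma sa_norm_pow_two_pow {P : E →L[ℝ] E} (hP : IsSelfAdjoint P) (k : ℕ) :
    ‖P ^ (2 ^ k)‖ = ‖P‖ ^ (2 ^ k) := by
  induction k with
  | zero => simp
  | succ k ih =>
      have h1 : P ^ (2 ^ (k+1)) = (P ^ (2 ^ k)) * (P ^ (2 ^ k)) := by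
        rw [← pow_add]; ring_nf
      rw [h1, sa_norm_mul_self (hP.pow _), ih, ← pow_add]
      ring_nf

lemma sa_norm_le_one_of_pow_bounded {P : E →L[ℝ] E} (hP : IsSelfAdjoint P)
    (C : ℝ) (hC : ∀ k : ℕ, ‖P ^ (2 ^ k)‖ ≤ C) : ‖P‖ ≤ 1 := by
  by_contra h
  push_neg at h
  obtain ⟨n, hn⟩ := pow_unbounded_of_one_lt C h
  have h2 : ‖P‖ ^ n ≤ ‖P‖ ^ (2 ^ n) :=
    pow_le_pow_right₀ h.le (Nat.le_of_lt Nat.lt_two_pow_self)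
  have := hC n
  rw [sa_norm_pow_two_pow hP] at this
  linarith

end Aux

section PF
variable {E : Type*} [NormedAddCommGroup E] [InnerProductSpace ℝ E] [CompleteSpace E]
variable {A : E →L[ℝ] E} {p : ℝ → E →L[ℝ] E}

lemma pf_mul (hp : IsPowerFamilyOf A p) {s t : ℝ} (hs : 0 ≤ s) (ht : 0 ≤ t) :
    p (s + t) = p s * p t := hp.2.2.1 s t hs ht

lemma pf_sa (hp : IsPowerFamilyOf A p) {t : ℝ} (ht : 0 ≤ t) :
    IsSelfAdjoint (p t) := (hp.2.2.2.1 t ht).isSelfAdjoint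

lemma pf_pow (hp : IsPowerFamilyOf A p) {u : ℝ} (hu : 0 ≤ u) (n : ℕ) :
    p (n * u) = (p u) ^ n := by
  induction n with
  | zero => simpa using hp.1
  | succ n ih =>
      have h : ((n : ℝ) + 1) * u = n * u + u := by ring
      rw [Nat.cast_add, Nat.cast_one, h, pf_mul hp (by positivity) hu, ih, pow_succ]

lemma pf_isUnit (hp : IsPowerFamilyOf A p) {t : ℝ} (ht : 0 ≤ t) : IsUnit (p t) := by
  have hc : Filter.Tendsto p (nhdsWithin (0:ℝ) (Set.Ici 0)) (nhds (p 0)) :=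
    hp.2.2.2.2 0 Set.self_mem_Ici
  have h1 : ∀ᶠ u in nhdsWithin (0:ℝ) (Set.Ici 0), IsUnit (p u) := by
    apply hc.eventually
    rw [hp.1]
    exact Units.isOpen.eventually_mem isUnit_one
  obtain ⟨ε, hε, hball⟩ := Metric.nhdsWithin_basis_ball.eventually_iff.mp h1
  rcases eq_or_lt_of_le ht with h0 | h0
  · rw [← h0, hp.1]; exact isUnit_one
  obtain ⟨n, hn⟩ := exists_nat_gt (t / (ε / 2))
  have hn0 : 0 < (n : ℝ) := lt_trans (by positivity) hn
  have htn : t = n * (t / n) := by field_simp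
  have hmem : t / n ∈ Set.Ici (0:ℝ) := Set.mem_Ici.mpr (by positivity)
  have hdist : dist (t / n) 0 < ε := by
    rw [Real.dist_eq, sub_zero, abs_of_nonneg (by positivity)]
    rw [div_lt_iff₀ hn0]
    have : t / (ε/2) < n := hn
    rw [div_lt_iff₀ (by positivity)] at this
    calc t < n * (ε/2) := by linarith
      _ < ε * n := by nlinarith
  have hu : IsUnit (p (t / n)) := hball ⟨Metric.mem_ball.mpr hdist, hmem⟩
  have := pf_pow hp (le_of_lt (by positivity : (0:ℝ) < t / n)) n
  rw [← htn] at this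
  rw [this]
  exact hu.pow n

/-- The inverse family. -/
lemma pf_inv_mul (hp : IsPowerFamilyOf A p) {t : ℝ} (ht : 0 ≤ t) :
    Ring.inverse (p t) * p t = 1 := Ring.inverse_mul_cancel _ (pf_isUnit hp ht)

lemma pf_mul_inv (hp : IsPowerFamilyOf A p) {t : ℝ} (ht : 0 ≤ t) :
    p t * Ring.inverse (p t) = 1 := Ring.mul_inverse_cancel _ (pf_isUnit hp ht)

lemma pf_inv_sa (hp : IsPowerFamilyOf A p) {t : ℝ} (ht : 0 ≤ t) :
    IsSelfAdjoint (Ring.inverse (p t)) := by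
  have := pf_sa hp ht
  rw [IsSelfAdjoint, ← Ring.inverse_star, this.star_eq]

lemma pf_inv_add (hp : IsPowerFamilyOf A p) {u v : ℝ} (hu : 0 ≤ u) (hv : 0 ≤ v) :
    Ring.inverse (p (u + v)) = Ring.inverse (p u) * Ring.inverse (p v) := by
  have h1 : p (u + v) * (Ring.inverse (p u) * Ring.inverse (p v)) = 1 := by
    rw [show u + v = v + u from add_comm u v, pf_mul hp hv hu]
    calc p v * p u * (Ring.inverse (p u) * Ring.inverse (p v))
        = p v * (p u * Ring.inverse (p u)) * Ring.inverse (p v) := by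
          simp only [mul_assoc]
      _ = 1 := by rw [pf_mul_inv hp hu, mul_one, pf_mul_inv hp hv]
  calc Ring.inverse (p (u + v))
      = Ring.inverse (p (u + v)) * (p (u + v) * (Ring.inverse (p u) * Ring.inverse (p v))) := by
        rw [h1, mul_one]
    _ = Ring.inverse (p u) * Ring.inverse (p v) := by
        rw [← mul_assoc, pf_inv_mul hp (by positivity), one_mul]

end PF

section Main

variable {H K : Type*} [NormedAddCommGroup H] [InnerProductSpace ℝ H] [CompleteSpace H]
    [NormedAddCommGroup K] [InnerProductSpace ℝ K] [CompleteSpace K]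

/-- The interpolating family `T α = A^{α/2} V W^{-α/2}`. -/
noncomputable def Tfam (V : K →L[ℝ] H) (pA : ℝ → H →L[ℝ] H) (pW : ℝ → K →L[ℝ] K) (α : ℝ) :
    K →L[ℝ] H :=
  pA (α / 2) ∘L (V ∘L Ring.inverse (pW (α / 2)))

variable {A : H →L[ℝ] H} {V : K →L[ℝ] H} {pA : ℝ → H →L[ℝ] H} {pW : ℝ → K →L[ℝ] K}

lemma Tfam_adjoint (hpA : IsPowerFamilyOf A pA)
    (hpW : IsPowerFamilyOf ((adjoint V) ∘L A ∘L V) pW) {α : ℝ} (hα : 0 ≤ α) :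
    adjoint (Tfam V pA pW α) = Ring.inverse (pW (α / 2)) ∘L (adjoint V ∘L pA (α / 2)) := by
  have ha : (0:ℝ) ≤ α / 2 := by linarith
  rw [Tfam, adjoint_comp, adjoint_comp, (pf_sa hpA ha).adjoint_eq,
    (pf_inv_sa hpW ha).adjoint_eq, comp_assoc]

lemma Tfam_adjoint_norm (f : K →L[ℝ] H) : ‖adjoint f‖ = ‖f‖ :=
  LinearIsometryEquiv.norm_map (ContinuousLinearMap.adjoint (𝕜 := ℝ) (E := K) (F := H)) f

lemma partial_isometry_norm_le (hV : V ∘L (adjoint V) ∘L V = V) : ‖V‖ ≤ 1 := by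
  have hVp : ∀ x, V ((adjoint V) (V x)) = V x := by
    intro x
    have := ContinuousLinearMap.ext_iff.mp hV x
    simpa using this
  set Q : K →L[ℝ] K := adjoint V ∘L V with hQ
  have hQ2 : Q ∘L Q = Q := by
    ext x; simp [hQ, hVp]
  have hQsa : IsSelfAdjoint Q := by
    rw [isSelfAdjoint_iff', hQ, adjoint_comp, adjoint_adjoint]
  have h1 : ‖Q‖ * ‖Q‖ = ‖Q‖ := by
    have := sa_norm_mul_self hQsa
    rw [show Q * Q = Q ∘L Q from rfl, hQ2] at this
    linarith
  have hQle : ‖Q‖ ≤ 1 := by nlinarith [norm_nonneg Q]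
  have h2 : ‖V‖ * ‖V‖ = ‖Q‖ := by rw [hQ, norm_adjoint_comp_self]
  nlinarith [norm_nonneg V]

set_option maxHeartbeats 2000000 in
/-- The midpoint step of the Pedersen-style iteration. -/
lemma Tfam_mid (hV : V ∘L (adjoint V) ∘L V = V) (hpA : IsPowerFamilyOf A pA)
    (hpW : IsPowerFamilyOf ((adjoint V) ∘L A ∘L V) pW)
    {α β : ℝ} (hα : 0 ≤ α) (hβ : 0 ≤ β)
    (h1 : ‖Tfam V pA pW α‖ ≤ 1) (h2 : ‖Tfam V pA pW β‖ ≤ 1) :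
    ‖Tfam V pA pW ((α + β) / 2)‖ ≤ 1 := by
  have hu : (0:ℝ) ≤ α / 2 := by linarith
  have hv : (0:ℝ) ≤ β / 2 := by linarith
  have hγ : (0:ℝ) ≤ (α + β) / 2 := by linarith
  have hw : (0:ℝ) ≤ (α + β) / 2 / 2 := by linarith
  set u := α / 2 with hu_def
  set v := β / 2 with hv_def
  set w := (α + β) / 2 / 2 with hw_def
  -- pointwise facts
  have hppA : ∀ (a b : ℝ), 0 ≤ a → 0 ≤ b → ∀ z, pA a (pA b z) = pA (a + b) z := by
    intro a b ha hb z
    rw [pf_mul hpA ha hb]; rfl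
  have hqq : ∀ (a b : ℝ), 0 ≤ a → 0 ≤ b → ∀ z,
      Ring.inverse (pW a) (Ring.inverse (pW b) z) = Ring.inverse (pW (a + b)) z := by
    intro a b ha hb z
    rw [pf_inv_add hpW ha hb]; rfl
  set X : H →L[ℝ] K := Ring.inverse (pW w) ∘L (adjoint V ∘L pA u) with hX
  set Y : K →L[ℝ] H := pA v ∘L (V ∘L Ring.inverse (pW w)) with hY
  set T : K →L[ℝ] H := Tfam V pA pW ((α + β) / 2) with hT
  set P : K →L[ℝ] K := adjoint T ∘L T with hP
  have hTdef : T = pA w ∘L (V ∘L Ring.inverse (pW w)) := rfl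
  have hPsa : IsSelfAdjoint P := by
    rw [isSelfAdjoint_iff', hP, adjoint_comp, adjoint_adjoint]
  have hPXY : P = X ∘L Y := by
    rw [hP, Tfam_adjoint hpA hpW hγ, hX, hY]
    ext x
    simp only [hT, Tfam, comp_apply]
    rw [hppA _ _ hw hw, hppA _ _ hu hv, show w + w = u + v by
      rw [hu_def, hv_def, hw_def]; ring]
  have hYX : Y ∘L X = Tfam V pA pW β ∘L adjoint (Tfam V pA pW α) := by
    rw [Tfam_adjoint hpA hpW hα, hX, hY]
    ext x
    simp only [Tfam, comp_apply]
    rw [hqq _ _ hw hw, hqq _ _ hv hu, show w + w = v + u by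
      rw [hu_def, hv_def, hw_def]; ring]
  have hYXnorm : ‖Y ∘L X‖ ≤ 1 := by
    rw [hYX]
    calc ‖Tfam V pA pW β ∘L adjoint (Tfam V pA pW α)‖
        ≤ ‖Tfam V pA pW β‖ * ‖adjoint (Tfam V pA pW α)‖ := opNorm_comp_le _ _
      _ = ‖Tfam V pA pW β‖ * ‖Tfam V pA pW α‖ := by rw [Tfam_adjoint_norm]
      _ ≤ 1 * 1 := by
          apply mul_le_mul h2 h1 (norm_nonneg _) (by linarith [norm_nonneg (Tfam V pA pW β)])
      _ = 1 := by norm_num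
  have hYXpow : ∀ n : ℕ, ‖(Y ∘L X) ^ n‖ ≤ 1 := by
    intro n
    induction n with
    | zero => simpa [one_def] using norm_id_le
    | succ n ih =>
        calc ‖(Y ∘L X) ^ (n + 1)‖ = ‖(Y ∘L X) ^ n * (Y ∘L X)‖ := by rw [pow_succ]
          _ ≤ ‖(Y ∘L X) ^ n‖ * ‖Y ∘L X‖ := norm_mul_le _ _
          _ ≤ 1 * 1 := mul_le_mul ih hYXnorm (norm_nonneg _) (by linarith [norm_nonneg ((Y ∘L X) ^ n)])
          _ = 1 := by norm_num
  have hPpow : ∀ n : ℕ, P ^ (n + 1) = X ∘L (((Y ∘L X) ^ n) ∘L Y) := by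
    intro n
    induction n with
    | zero => simp [hPXY, one_def]
    | succ n ih =>
        have : P ^ (n + 2) = P ^ (n + 1) * P := by rw [pow_succ]
        rw [this, ih, hPXY]
        rw [show ∀ (a : K →L[ℝ] K) (b : K →L[ℝ] K), a * b = a ∘L b from fun _ _ => rfl]
        rw [pow_succ]
        rw [show ∀ (a b : H →L[ℝ] H), a * b = a ∘L b from fun _ _ => rfl]
        simp only [comp_assoc]
  have hPbound : ∀ k : ℕ, ‖P ^ (2 ^ k)‖ ≤ ‖X‖ * ‖Y‖ := by
    intro k
    have h2k : 2 ^ k = (2 ^ k - 1) + 1 := by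
      have := Nat.one_le_two_pow (n := k)
      omega
    rw [h2k, hPpow]
    calc ‖X ∘L (((Y ∘L X) ^ (2 ^ k - 1)) ∘L Y)‖
        ≤ ‖X‖ * ‖((Y ∘L X) ^ (2 ^ k - 1)) ∘L Y‖ := opNorm_comp_le _ _
      _ ≤ ‖X‖ * (‖(Y ∘L X) ^ (2 ^ k - 1)‖ * ‖Y‖) := by
          apply mul_le_mul_of_nonneg_left (opNorm_comp_le _ _) (norm_nonneg _)
      _ ≤ ‖X‖ * (1 * ‖Y‖) := by
          apply mul_le_mul_of_nonneg_left _ (norm_nonneg _)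
          exact mul_le_mul_of_nonneg_right (hYXpow _) (norm_nonneg _)
      _ = ‖X‖ * ‖Y‖ := by rw [one_mul]
  have hPle : ‖P‖ ≤ 1 := sa_norm_le_one_of_pow_bounded hPsa (‖X‖ * ‖Y‖) hPbound
  have hfinal : ‖T‖ * ‖T‖ ≤ 1 := by
    rw [← norm_adjoint_comp_self T]
    exact hPle
  nlinarith [norm_nonneg T]

lemma Tfam_zero (hpA : IsPowerFamilyOf A pA)
    (hpW : IsPowerFamilyOf ((adjoint V) ∘L A ∘L V) pW) : Tfam V pA pW 0 = V := by
  rw [Tfam]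
  norm_num [hpA.1, hpW.1, Ring.inverse_one]
  ext x
  simp [one_def]

lemma Tfam_one_norm (hpA : IsPowerFamilyOf A pA)
    (hpW : IsPowerFamilyOf ((adjoint V) ∘L A ∘L V) pW) : ‖Tfam V pA pW 1‖ ≤ 1 := by
  have hhalf : (0:ℝ) ≤ 1/2 := by norm_num
  have hid : adjoint (Tfam V pA pW 1) ∘L Tfam V pA pW 1 = 1 := by
    rw [Tfam_adjoint hpA hpW zero_le_one]
    ext x
    simp only [Tfam, comp_apply, one_apply]
    have e1 : ∀ z, pA (1/2) (pA (1/2) z) = A z := by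
      intro z
      rw [show (pA (1/2)) ((pA (1/2)) z) = (pA (1/2) * pA (1/2)) z from rfl,
        ← pf_mul hpA hhalf hhalf]
      norm_num [hpA.2.1]
    have e2 : ∀ z, (adjoint V) (A (V z)) = pW (1/2) (pW (1/2) z) := by
      intro z
      have h : (adjoint V) (A (V z)) = ((adjoint V) ∘L A ∘L V) z := rfl
      have hW2 : pW 1 = pW (1/2) * pW (1/2) := by
        rw [← pf_mul hpW hhalf hhalf]; norm_num
      rw [h, ← hpW.2.1, hW2]
      rfl
    have hqp : ∀ z, Ring.inverse (pW (1/2)) (pW (1/2) z) = z := by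
      intro z
      have := ContinuousLinearMap.ext_iff.mp (pf_inv_mul hpW hhalf) z
      simpa using this
    have hpq : ∀ z, pW (1/2) (Ring.inverse (pW (1/2)) z) = z := by
      intro z
      have := ContinuousLinearMap.ext_iff.mp (pf_mul_inv hpW hhalf) z
      simpa using this
    rw [e1, e2, hpq, hqp]
    rfl
  have h1 : ‖Tfam V pA pW 1‖ * ‖Tfam V pA pW 1‖ ≤ 1 := by
    rw [← norm_adjoint_comp_self, hid]
    simpa [one_def] using norm_id_le (𝕜 := ℝ) (E := K)
  nlinarith [norm_nonneg (Tfam V pA pW 1)]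

lemma Tfam_dyadic (hV : V ∘L (adjoint V) ∘L V = V) (hpA : IsPowerFamilyOf A pA)
    (hpW : IsPowerFamilyOf ((adjoint V) ∘L A ∘L V) pW) :
    ∀ n k : ℕ, k ≤ 2 ^ n → ‖Tfam V pA pW ((k : ℝ) / 2 ^ n)‖ ≤ 1 := by
  intro n
  induction n with
  | zero =>
      intro k hk
      interval_cases k
      · simpa [Tfam_zero hpA hpW] using partial_isometry_norm_le hV
      · simpa using Tfam_one_norm hpA hpW
  | succ n ih =>
      intro k hk
      have h2 : 2 ^ (n + 1) = 2 * 2 ^ n := by rw [pow_succ]; ring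
      rcases Nat.even_or_odd k with ⟨m, hm⟩ | ⟨m, hm⟩
      · have hm2 : m ≤ 2 ^ n := by omega
        have harith : (k : ℝ) / 2 ^ (n+1) = (((m:ℝ)/2^n) + ((m:ℝ)/2^n)) / 2 := by
          subst hm; push_cast
          rw [pow_succ]
          field_simp
        rw [harith]
        exact Tfam_mid hV hpA hpW (by positivity) (by positivity) (ih m hm2) (ih m hm2)
      · have hm2 : m + 1 ≤ 2 ^ n := by omega
        have harith : (k : ℝ) / 2 ^ (n+1) = (((m:ℝ)/2^n) + (((m:ℝ)+1)/2^n)) / 2 := by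
          subst hm; push_cast
          rw [pow_succ]
          field_simp
          ring
        rw [harith]
        have hb := ih (m+1) hm2
        push_cast at hb
        exact Tfam_mid hV hpA hpW (by positivity) (by positivity) (ih m (by omega)) hb

lemma Tfam_contOn (hpA : IsPowerFamilyOf A pA)
    (hpW : IsPowerFamilyOf ((adjoint V) ∘L A ∘L V) pW) :
    ContinuousOn (Tfam V pA pW) (Set.Ici 0) := by
  have hhalf : ContinuousOn (fun α : ℝ => α / 2) (Set.Ici 0) :=
    (continuous_id.div_const 2).continuousOn
  have hmaps : Set.MapsTo (fun α : ℝ => α / 2) (Set.Ici (0:ℝ)) (Set.Ici (0:ℝ)) := by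
    intro x hx
    simp only [Set.mem_Ici] at *
    linarith
  have h1 : ContinuousOn (fun α : ℝ => pA (α / 2)) (Set.Ici 0) :=
    hpA.2.2.2.2.comp hhalf hmaps
  have h2 : ContinuousOn (fun α : ℝ => Ring.inverse (pW (α / 2))) (Set.Ici 0) := by
    intro a ha
    have hcw : ContinuousWithinAt (fun α : ℝ => pW (α / 2)) (Set.Ici 0) a :=
      (hpW.2.2.2.2.comp hhalf hmaps) a ha
    have ha2 : (0:ℝ) ≤ a / 2 := by
      simp only [Set.mem_Ici] at ha; linarith
    obtain ⟨u, hu⟩ := pf_isUnit hpW ha2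
    have hca : ContinuousAt Ring.inverse (pW (a/2)) := by
      rw [← hu]; exact NormedRing.inverse_continuousAt u
    exact hca.tendsto.comp hcw
  have h3 : ContinuousOn (fun α : ℝ => V ∘L Ring.inverse (pW (α / 2))) (Set.Ici 0) :=
    (continuousOn_const).clm_comp h2
  exact h1.clm_comp h3

lemma Tfam_key (hV : V ∘L (adjoint V) ∘L V = V) (hpA : IsPowerFamilyOf A pA)
    (hpW : IsPowerFamilyOf ((adjoint V) ∘L A ∘L V) pW)
    {α : ℝ} (hα : α ∈ Set.Icc (0:ℝ) 1) : ‖Tfam V pA pW α‖ ≤ 1 := by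
  obtain ⟨hα0, hα1⟩ := hα
  set f : ℕ → ℝ := fun n => (⌊α * 2 ^ n⌋₊ : ℝ) / 2 ^ n with hf
  have hfle : ∀ n, f n ≤ α := by
    intro n
    rw [hf, div_le_iff₀ (by positivity)]
    exact Nat.floor_le (by positivity)
  have hfge : ∀ n, α - (1/2)^n ≤ f n := by
    intro n
    have h := Nat.lt_floor_add_one (α * 2 ^ n)
    have hpow : ((1:ℝ)/2)^n * 2^n = 1 := by
      rw [← mul_pow]; norm_num
    rw [hf, le_div_iff₀ (by positivity : (0:ℝ) < 2 ^ n)]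
    nlinarith [h]
  have htends : Filter.Tendsto f Filter.atTop (nhds α) := by
    have hl : Filter.Tendsto (fun n : ℕ => α - (1/2)^n) Filter.atTop (nhds α) := by
      have := tendsto_pow_atTop_nhds_zero_of_lt_one (by norm_num : (0:ℝ) ≤ 1/2)
        (by norm_num : (1:ℝ)/2 < 1)
      simpa using (tendsto_const_nhds (x := α)).sub this
    exact tendsto_of_tendsto_of_tendsto_of_le_of_le hl tendsto_const_nhds hfge hfle
  have hwithin : Filter.Tendsto f Filter.atTop (nhdsWithin α (Set.Ici 0)) := by
    apply tendsto_nhdsWithin_of_tendsto_nhds_of_eventually_within _ htends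
    apply Filter.Eventually.of_forall
    intro n
    simp only [hf, Set.mem_Ici]
    positivity
  have hc : ContinuousWithinAt (fun x => ‖Tfam V pA pW x‖) (Set.Ici 0) α :=
    ((Tfam_contOn hpA hpW) α (Set.mem_Ici.mpr hα0)).norm
  have hbound : ∀ n, ‖Tfam V pA pW (f n)‖ ≤ 1 := by
    intro n
    have hk : ⌊α * 2 ^ n⌋₊ ≤ 2 ^ n := by
      have : α * 2 ^ n ≤ ((2 ^ n : ℕ) : ℝ) := by
        push_cast
        nlinarith [pow_pos (by norm_num : (0:ℝ) < 2) n]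
      calc ⌊α * 2 ^ n⌋₊ ≤ ⌊((2 ^ n : ℕ) : ℝ)⌋₊ := Nat.floor_le_floor this
        _ = 2 ^ n := Nat.floor_natCast _
    have := Tfam_dyadic hV hpA hpW n ⌊α * 2 ^ n⌋₊ hk
    simpa [hf] using this
  exact le_of_tendsto (hc.tendsto.comp hwithin) (Filter.Eventually.of_forall hbound)

end Main

/-- For a positive operator `A` on a real separable Hilbert space `H`,
a partial isometry `V : K → H` and a bounded operator `B : K → K`, and exponents
`0 ≤ r, s ≤ 1/2`, one has `‖A^r V B V^* A^s‖ ≤ ‖(V^* A V)^r B (V^* A V)^s‖`. -/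
theorem stmt0 {H K : Type*} [NormedAddCommGroup H] [InnerProductSpace ℝ H] [CompleteSpace H]
    [TopologicalSpace.SeparableSpace H]
    [NormedAddCommGroup K] [InnerProductSpace ℝ K] [CompleteSpace K]
    [TopologicalSpace.SeparableSpace K]
    (A : H →L[ℝ] H) (hA : A.IsPositive)
    (V : K →L[ℝ] H) (hV : V ∘L (adjoint V) ∘L V = V)
    (B : K →L[ℝ] K)
    (pA : ℝ → H →L[ℝ] H) (hpA : IsPowerFamilyOf A pA)
    (pW : ℝ → K →L[ℝ] K) (hpW : IsPowerFamilyOf ((adjoint V) ∘L A ∘L V) pW)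
    (r s : ℝ) (hr0 : 0 ≤ r) (hr : r ≤ 1 / 2) (hs0 : 0 ≤ s) (hs : s ≤ 1 / 2) :
    ‖pA r ∘L V ∘L B ∘L (adjoint V) ∘L pA s‖ ≤ ‖pW r ∘L B ∘L pW s‖ := by
  have hTr := Tfam_key hV hpA hpW (α := 2 * r) ⟨by linarith, by linarith⟩
  have hTs := Tfam_key hV hpA hpW (α := 2 * s) ⟨by linarith, by linarith⟩
  have hqp : ∀ (a : ℝ), 0 ≤ a → ∀ z, Ring.inverse (pW a) (pW a z) = z := by
    intro a ha z
    have := ContinuousLinearMap.ext_iff.mp (pf_inv_mul hpW ha) z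
    simpa using this
  have hpq : ∀ (a : ℝ), 0 ≤ a → ∀ z, pW a (Ring.inverse (pW a) z) = z := by
    intro a ha z
    have := ContinuousLinearMap.ext_iff.mp (pf_mul_inv hpW ha) z
    simpa using this
  have hfact : pA r ∘L V ∘L B ∘L (adjoint V) ∘L pA s
      = Tfam V pA pW (2 * r) ∘L ((pW r ∘L B ∘L pW s) ∘L adjoint (Tfam V pA pW (2 * s))) := by
    rw [Tfam_adjoint hpA hpW (by linarith)]
    ext x
    simp only [Tfam, comp_apply]
    rw [show 2 * r / 2 = r by ring, show 2 * s / 2 = s by ring, hpq s hs0, hqp r hr0]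
  rw [hfact]
  have hmidnn : (0:ℝ) ≤ ‖pW r ∘L B ∘L pW s‖ := norm_nonneg _
  calc ‖Tfam V pA pW (2 * r) ∘L ((pW r ∘L B ∘L pW s) ∘L adjoint (Tfam V pA pW (2 * s)))‖
      ≤ ‖Tfam V pA pW (2 * r)‖ * ‖(pW r ∘L B ∘L pW s) ∘L adjoint (Tfam V pA pW (2 * s))‖ :=
        opNorm_comp_le _ _
    _ ≤ ‖Tfam V pA pW (2 * r)‖ * (‖pW r ∘L B ∘L pW s‖ * ‖adjoint (Tfam V pA pW (2 * s))‖) := by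
        exact mul_le_mul_of_nonneg_left (opNorm_comp_le _ _) (norm_nonneg _)
    _ = ‖Tfam V pA pW (2 * r)‖ * (‖pW r ∘L B ∘L pW s‖ * ‖Tfam V pA pW (2 * s)‖) := by
        rw [Tfam_adjoint_norm]
    _ ≤ 1 * (‖pW r ∘L B ∘L pW s‖ * 1) := by
        have h1 : ‖pW r ∘L B ∘L pW s‖ * ‖Tfam V pA pW (2 * s)‖ ≤ ‖pW r ∘L B ∘L pW s‖ * 1 :=
          mul_le_mul_of_nonneg_left hTs hmidnn
        exact mul_le_mul hTr h1 (by positivity) zero_le_one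
    _ = ‖pW r ∘L B ∘L pW s‖ := by ring
end

section
/- Let A and B be positive definite symmetric real matrices of the same size and let 0 ≤ u ≤ 1. Then ‖A^u B^u‖ ≤ ‖A B‖^u, where ‖·‖ denotes the spectral (operator) norm and A^u, B^u are the matrix powers defined by the spectral decomposition (Cordes inequality). -/
open scoped Matrix.Norms.L2Operator

/-- The real power `A ^ u` of a positive definite symmetric real matrix, defined through the
spectral decomposition `A = U diag(σᵢ) Uᵀ` by `A ^ u = U diag(σᵢ^u) Uᵀ`. -/
noncomputable def Matrix.IsHermitian.matrixRpow {n : Type*} [Fintype n] [DecidableEq n]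
    {A : Matrix n n ℝ} (hA : A.IsHermitian) (u : ℝ) : Matrix n n ℝ :=
  (hA.eigenvectorUnitary : Matrix n n ℝ) *
    Matrix.diagonal (fun i => hA.eigenvalues i ^ u) *
      (star (hA.eigenvectorUnitary : Matrix n n ℝ))

namespace CordesAux

open Matrix

variable {n : Type*} [Fintype n] [DecidableEq n]

lemma norm_diagonal_le {d : n → ℝ} {c : ℝ} (hc : 0 ≤ c) (h : ∀ i, |d i| ≤ c) :
    ‖Matrix.diagonal d‖ ≤ c := by
  rw [Matrix.l2_opNorm_def]
  refine ContinuousLinearMap.opNorm_le_bound _ hc fun x => ?_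
  have hx : (((Matrix.toEuclideanLin (𝕜 := ℝ) (m := n) (n := n)).trans
      LinearMap.toContinuousLinearMap (Matrix.diagonal d)) : EuclideanSpace ℝ n → EuclideanSpace ℝ n) x
      = Matrix.toEuclideanLin (Matrix.diagonal d) x := rfl
  rw [hx, Matrix.toEuclideanLin_apply, EuclideanSpace.norm_eq, EuclideanSpace.norm_eq]
  rw [← Real.sqrt_sq hc, ← Real.sqrt_mul (by positivity)]
  apply Real.sqrt_le_sqrt
  rw [Finset.mul_sum]
  apply Finset.sum_le_sum
  intro i _
  have h1 : ‖(WithLp.equiv 2 (n → ℝ)).symm (Matrix.diagonal d *ᵥ (WithLp.equiv 2 (n → ℝ)) x) i‖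
      = |d i * ((WithLp.equiv 2 (n → ℝ)) x) i| := by
    simp [Matrix.mulVec_diagonal, Real.norm_eq_abs, abs_mul]
  rw [show ‖(WithLp.toLp 2 (diagonal d *ᵥ x.ofLp)).ofLp i‖ = _ from h1, Real.norm_eq_abs]
  have h2 : ((WithLp.equiv 2 (n → ℝ)) x) i = x i := rfl
  rw [h2, abs_mul, mul_pow]
  have h3 : |d i| ^ 2 ≤ c ^ 2 := by
    have := h i
    nlinarith [abs_nonneg (d i)]
  nlinarith [sq_nonneg (x i), sq_abs (x i)]

lemma posSemidef_norm_mem_spectrum [Nonempty n] {M : Matrix n n ℝ} (hM : M.PosSemidef) :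
    ‖M‖ ∈ spectrum ℝ M := by
  obtain ⟨i, -, hi⟩ := Finset.univ.exists_max_image hM.1.eigenvalues ⟨Classical.arbitrary n,
    Finset.mem_univ _⟩
  have hspec := hM.1.eigenvalues_mem_spectrum_real i
  have h1 : hM.1.eigenvalues i ≤ ‖M‖ := by
    have := spectrum.norm_le_norm_of_mem hspec
    rw [Real.norm_eq_abs] at this
    exact (le_abs_self _).trans this
  have h2 : ‖M‖ ≤ hM.1.eigenvalues i := by
    have hST : M = (hM.1.eigenvectorUnitary : Matrix n n ℝ) * Matrix.diagonal (hM.1.eigenvalues)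
        * (star (hM.1.eigenvectorUnitary : Matrix n n ℝ)) := by
      conv_lhs => rw [hM.1.spectral_theorem]
      norm_num
    calc ‖M‖ = ‖(hM.1.eigenvectorUnitary : Matrix n n ℝ) * (Matrix.diagonal (hM.1.eigenvalues)
          * (star (hM.1.eigenvectorUnitary : Matrix n n ℝ)))‖ := by
          conv_lhs => rw [hST, mul_assoc]
      _ = ‖Matrix.diagonal (hM.1.eigenvalues) * (star (hM.1.eigenvectorUnitary : Matrix n n ℝ))‖ :=
          CStarRing.norm_coe_unitary_mul _ _
      _ = ‖Matrix.diagonal (hM.1.eigenvalues) * ((star hM.1.eigenvectorUnitary : Matrix.unitaryGroup n ℝ) : Matrix n n ℝ)‖ := rfl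
      _ = ‖Matrix.diagonal (hM.1.eigenvalues)‖ := CStarRing.norm_mul_coe_unitary _ _
      _ ≤ hM.1.eigenvalues i := norm_diagonal_le (hM.eigenvalues_nonneg i)
          (fun j => by rw [abs_of_nonneg (hM.eigenvalues_nonneg j)]; exact hi j (Finset.mem_univ j))
  have : ‖M‖ = hM.1.eigenvalues i := le_antisymm h2 h1
  rw [this]; exact hspec

variable {A : Matrix n n ℝ}

lemma rpow_mul_rpow (hA : A.PosDef) (u v : ℝ) :
    hA.1.matrixRpow u * hA.1.matrixRpow v = hA.1.matrixRpow (u + v) := by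
  unfold Matrix.IsHermitian.matrixRpow
  have key : Matrix.diagonal (fun i => hA.1.eigenvalues i ^ u)
      * Matrix.diagonal (fun i => hA.1.eigenvalues i ^ v)
      = Matrix.diagonal (fun i => hA.1.eigenvalues i ^ (u + v)) := by
    rw [Matrix.diagonal_mul_diagonal]
    have : (fun i => hA.1.eigenvalues i ^ u * hA.1.eigenvalues i ^ v)
        = fun i => hA.1.eigenvalues i ^ (u + v) :=
      funext fun i => (Real.rpow_add (hA.eigenvalues_pos i) u v).symm
    rw [this]
  calc (hA.1.eigenvectorUnitary : Matrix n n ℝ) * Matrix.diagonal (fun i => hA.1.eigenvalues i ^ u)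
        * (star (hA.1.eigenvectorUnitary : Matrix n n ℝ))
        * ((hA.1.eigenvectorUnitary : Matrix n n ℝ) * Matrix.diagonal (fun i => hA.1.eigenvalues i ^ v)
        * (star (hA.1.eigenvectorUnitary : Matrix n n ℝ)))
      = (hA.1.eigenvectorUnitary : Matrix n n ℝ) * Matrix.diagonal (fun i => hA.1.eigenvalues i ^ u)
        * ((star (hA.1.eigenvectorUnitary : Matrix n n ℝ)) * (hA.1.eigenvectorUnitary : Matrix n n ℝ))
        * Matrix.diagonal (fun i => hA.1.eigenvalues i ^ v)
        * (star (hA.1.eigenvectorUnitary : Matrix n n ℝ)) := by noncomm_ring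
    _ = (hA.1.eigenvectorUnitary : Matrix n n ℝ) * (Matrix.diagonal (fun i => hA.1.eigenvalues i ^ u)
        * Matrix.diagonal (fun i => hA.1.eigenvalues i ^ v))
        * (star (hA.1.eigenvectorUnitary : Matrix n n ℝ)) := by
        rw [Unitary.coe_star_mul_self]; noncomm_ring
    _ = _ := by rw [key]

lemma rpow_zero' (hA : A.PosDef) : hA.1.matrixRpow 0 = 1 := by
  unfold Matrix.IsHermitian.matrixRpow
  have : (fun i => hA.1.eigenvalues i ^ (0:ℝ)) = fun _ => (1:ℝ) := by
    funext i; exact Real.rpow_zero _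
  rw [this, Matrix.diagonal_one, mul_one,
    Matrix.mem_unitaryGroup_iff.mp hA.1.eigenvectorUnitary.2]

lemma rpow_one' (hA : A.PosDef) : hA.1.matrixRpow 1 = A := by
  unfold Matrix.IsHermitian.matrixRpow
  have : (fun i => hA.1.eigenvalues i ^ (1:ℝ)) = hA.1.eigenvalues := by
    funext i; exact Real.rpow_one _
  rw [this]
  conv_rhs => rw [hA.1.spectral_theorem]
  norm_num

lemma rpow_isHermitian (hA : A.PosDef) (u : ℝ) :
    (hA.1.matrixRpow u)ᴴ = hA.1.matrixRpow u := by
  unfold Matrix.IsHermitian.matrixRpow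
  rw [Matrix.conjTranspose_mul, Matrix.conjTranspose_mul, Matrix.diagonal_conjTranspose]
  simp [mul_assoc, Matrix.star_eq_conjTranspose]

lemma continuous_matrixRpow (hA : A.PosDef) : Continuous (fun u => hA.1.matrixRpow u) := by
  unfold Matrix.IsHermitian.matrixRpow
  have hdiagLM : Continuous (Matrix.diagonal : (n → ℝ) → Matrix n n ℝ) := by
    let L : (n → ℝ) →ₗ[ℝ] Matrix n n ℝ :=
      { toFun := Matrix.diagonal
        map_add' := fun a b => (Matrix.diagonal_add a b).symm
        map_smul' := fun r a => by simp [Matrix.diagonal_smul] }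
    exact L.continuous_of_finiteDimensional
  have hfun : Continuous (fun u : ℝ => fun i => hA.1.eigenvalues i ^ u) := by
    apply continuous_pi
    intro i
    have : (fun u : ℝ => hA.1.eigenvalues i ^ u)
        = fun u => Real.exp (Real.log (hA.1.eigenvalues i) * u) :=
      funext fun u => Real.rpow_def_of_pos (hA.eigenvalues_pos i) u
    rw [this]
    exact Real.continuous_exp.comp (continuous_const.mul continuous_id)
  exact (continuous_const.mul (hdiagLM.comp hfun)).mul continuous_const

/-- The matrix power as a unit. -/
noncomputable def rpowUnit (hA : A.PosDef) (u : ℝ) : (Matrix n n ℝ)ˣ where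
  val := hA.1.matrixRpow u
  inv := hA.1.matrixRpow (-u)
  val_inv := by rw [rpow_mul_rpow hA, add_neg_cancel, rpow_zero' hA]
  inv_val := by rw [rpow_mul_rpow hA, neg_add_cancel, rpow_zero' hA]

section Key

variable [Nonempty n]

lemma cordes_key' {P Q : ℝ → Matrix n n ℝ}
    (hPm : ∀ u v, P u * P v = P (u+v)) (hQm : ∀ u v, Q u * Q v = Q (u+v))
    (hP0 : P 0 = 1) (hQ0 : Q 0 = 1)
    (hPH : ∀ u, (P u)ᴴ = P u) (hQH : ∀ u, (Q u)ᴴ = Q u)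
    (s t c : ℝ) (hc : c = (s+t)/2) :
    ‖P c * Q c‖ ^ 2 ≤ ‖P s * Q s‖ * ‖P t * Q t‖ := by
  have mkunit : ∀ (R : ℝ → Matrix n n ℝ), (∀ u v, R u * R v = R (u+v)) → R 0 = 1 →
      ∀ u, IsUnit (R u) := by
    intro R hm h0 u
    exact ⟨⟨R u, R (-u), by rw [hm, add_neg_cancel, h0], by rw [hm, neg_add_cancel, h0]⟩, rfl⟩
  have hXH : (P c * Q c)ᴴ = Q c * P c := by rw [Matrix.conjTranspose_mul, hPH, hQH]
  have hXu : IsUnit (P c * Q c) := (mkunit P hPm hP0 c).mul (mkunit Q hQm hQ0 c)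
  have hXHu : IsUnit ((P c * Q c)ᴴ) := by
    rw [hXH]; exact (mkunit Q hQm hQ0 c).mul (mkunit P hPm hP0 c)
  have hMu : IsUnit ((P c * Q c)ᴴ * (P c * Q c)) := hXHu.mul hXu
  have hMps : ((P c * Q c)ᴴ * (P c * Q c)).PosSemidef :=
    Matrix.posSemidef_conjTranspose_mul_self _
  have hmem : ‖(P c * Q c)ᴴ * (P c * Q c)‖ ∈ spectrum ℝ ((P c * Q c)ᴴ * (P c * Q c)) :=
    posSemidef_norm_mem_spectrum hMps
  -- the unit Q c
  let uQ : (Matrix n n ℝ)ˣ :=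
    ⟨Q c, Q (-c), by rw [hQm, add_neg_cancel, hQ0], by rw [hQm, neg_add_cancel, hQ0]⟩
  have hconj : (uQ : Matrix n n ℝ) * (P (s+t) * Q (s+t)) * ((uQ⁻¹ : (Matrix n n ℝ)ˣ) : Matrix n n ℝ)
      = (P c * Q c)ᴴ * (P c * Q c) := by
    have hcoe : (uQ : Matrix n n ℝ) = Q c := rfl
    have hcoe' : ((uQ⁻¹ : (Matrix n n ℝ)ˣ) : Matrix n n ℝ) = Q (-c) := rfl
    have e1 : P c * P c = P (s+t) := by rw [hPm]; congr 1; rw [hc]; ring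
    have e2 : Q (s+t) * Q (-c) = Q c := by rw [hQm]; congr 1; rw [hc]; ring
    rw [hcoe, hcoe', hXH]
    calc Q c * (P (s+t) * Q (s+t)) * Q (-c)
        = Q c * P (s+t) * (Q (s+t) * Q (-c)) := by noncomm_ring
      _ = Q c * P (s+t) * Q c := by rw [e2]
      _ = Q c * (P c * P c) * Q c := by rw [e1]
      _ = Q c * P c * (P c * Q c) := by noncomm_ring
  have hmem2 : ‖(P c * Q c)ᴴ * (P c * Q c)‖ ∈ spectrum ℝ (P (s+t) * Q (s+t)) := by
    rw [← spectrum.units_conjugate (u := uQ) (a := P (s+t) * Q (s+t)), hconj]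
    exact hmem
  have hne : ‖(P c * Q c)ᴴ * (P c * Q c)‖ ≠ 0 := by
    intro h0
    exact (spectrum.zero_notMem_iff (R := ℝ)).mpr hMu (h0 ▸ hmem)
  have hfact : P (s+t) * Q (s+t) = P s * (P t * Q t * Q s) := by
    have e3 : P s * P t = P (s+t) := hPm s t
    have e4 : Q t * Q s = Q (s+t) := by rw [hQm]; congr 1; ring
    calc P (s+t) * Q (s+t) = (P s * P t) * (Q t * Q s) := by rw [e3, e4]
      _ = P s * (P t * Q t * Q s) := by noncomm_ring
  have hmem3 : ‖(P c * Q c)ᴴ * (P c * Q c)‖ ∈ spectrum ℝ ((P t * Q t) * (Q s * P s)) := by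
    have h5 : ‖(P c * Q c)ᴴ * (P c * Q c)‖ ∈ spectrum ℝ (P s * (P t * Q t * Q s)) \ {0} := by
      rw [← hfact]; exact ⟨hmem2, hne⟩
    rw [spectrum.nonzero_mul_comm] at h5
    have h6 := h5.1
    have : P t * Q t * Q s * P s = (P t * Q t) * (Q s * P s) := by noncomm_ring
    rwa [this] at h6
  have hle : ‖(P c * Q c)ᴴ * (P c * Q c)‖ ≤ ‖(P t * Q t) * (Q s * P s)‖ := by
    have := spectrum.norm_le_norm_of_mem hmem3
    rwa [Real.norm_eq_abs, abs_of_nonneg (norm_nonneg _)] at this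
  have hQP : ‖Q s * P s‖ = ‖P s * Q s‖ := by
    have h7 : Q s * P s = (P s * Q s)ᴴ := by rw [Matrix.conjTranspose_mul, hPH, hQH]
    rw [h7, Matrix.l2_opNorm_conjTranspose]
  calc ‖P c * Q c‖ ^ 2 = ‖(P c * Q c)ᴴ * (P c * Q c)‖ := by
        rw [sq]; exact (Matrix.l2_opNorm_conjTranspose_mul_self _).symm
    _ ≤ ‖(P t * Q t) * (Q s * P s)‖ := hle
    _ ≤ ‖P t * Q t‖ * ‖Q s * P s‖ := Matrix.l2_opNorm_mul _ _
    _ = ‖P s * Q s‖ * ‖P t * Q t‖ := by rw [hQP]; ring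

end Key

/-- Dyadic step of the convexity argument. -/
lemma dyadic_bound {f : ℝ → ℝ} (hf0 : f 0 = 1) (hfpos : ∀ u, 0 < f u)
    (key : ∀ s t : ℝ, f ((s+t)/2) ^ 2 ≤ f s * f t) :
    ∀ (m k : ℕ), k ≤ 2^m → f ((k : ℝ) / 2^m) ≤ f 1 ^ ((k : ℝ) / 2^m) := by
  intro m
  induction m with
  | zero =>
    intro k hk
    interval_cases k
    · simpa using hf0.le
    · simp
  | succ m ih =>
    intro k hk
    have h2m : (2:ℕ)^(m+1) = 2 * 2^m := by ring
    rcases Nat.even_or_odd k with ⟨j, hj⟩ | ⟨j, hj⟩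
    · subst hj
      have hj2 : j ≤ 2^m := by omega
      have : ((j + j : ℕ) : ℝ) / 2^(m+1) = (j : ℝ) / 2^m := by
        push_cast
        field_simp
        ring
      rw [this]
      exact ih j hj2
    · subst hj
      have hj2 : j + 1 ≤ 2^m := by omega
      have hj1 : j ≤ 2^m := by omega
      set s : ℝ := (j : ℝ) / 2^m with hs
      set t : ℝ := ((j:ℝ) + 1) / 2^m with ht
      have hmid : ((2 * j + 1 : ℕ) : ℝ) / 2^(m+1) = (s + t) / 2 := by
        rw [hs, ht]
        push_cast
        field_simp
        ring
      rw [hmid]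
      have h1 := key s t
      have h2 : f s ≤ f 1 ^ s := by
        have := ih j hj1; rwa [← hs] at this
      have h3 : f t ≤ f 1 ^ t := by
        have := ih (j+1) hj2
        have hcast : (((j+1 : ℕ)) : ℝ) / 2^m = t := by rw [ht]; push_cast; ring
        rwa [hcast] at this
      have h4 : f ((s+t)/2) ^ 2 ≤ f 1 ^ s * f 1 ^ t :=
        h1.trans (mul_le_mul h2 h3 (hfpos t).le (Real.rpow_nonneg (hfpos 1).le s))
      have h5 : f 1 ^ s * f 1 ^ t = (f 1 ^ ((s+t)/2)) ^ 2 := by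
        rw [← Real.rpow_natCast (f 1 ^ ((s+t)/2)) 2, ← Real.rpow_mul (hfpos 1).le,
          ← Real.rpow_add (hfpos 1)]
        congr 1
        push_cast
        ring
      refine le_of_pow_le_pow_left₀ two_ne_zero (Real.rpow_nonneg (hfpos 1).le _) ?_
      rw [← h5]
      exact h4

lemma le_rpow_of_dyadic {f : ℝ → ℝ} (hf : Continuous f) (hf1 : 0 < f 1)
    (hdy : ∀ m k : ℕ, k ≤ 2^m → f ((k:ℝ) / 2^m) ≤ f 1 ^ ((k:ℝ) / 2^m))
    {u : ℝ} (hu0 : 0 ≤ u) (hu1 : u ≤ 1) : f u ≤ f 1 ^ u := by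
  set v : ℕ → ℝ := fun m => (⌊u * 2^m⌋₊ : ℝ) / 2^m with hv
  have hvle : ∀ m, ⌊u * 2^m⌋₊ ≤ 2^m := by
    intro m
    have : u * 2^m ≤ ((2^m : ℕ) : ℝ) := by
      push_cast
      nlinarith [pow_pos (by norm_num : (0:ℝ) < 2) m]
    calc ⌊u * 2^m⌋₊ ≤ ⌊((2^m : ℕ) : ℝ)⌋₊ := Nat.floor_le_floor this
      _ = 2^m := Nat.floor_natCast _
  have hvbound : ∀ m, |v m - u| ≤ (1/2 : ℝ)^m := by
    intro m
    have h2p : (0:ℝ) < 2^m := pow_pos (by norm_num) m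
    have hfl : (⌊u * 2^m⌋₊ : ℝ) ≤ u * 2^m := Nat.floor_le (by positivity)
    have hfl2 : u * 2^m < (⌊u * 2^m⌋₊ : ℝ) + 1 := Nat.lt_floor_add_one _
    have hmul : (1/2:ℝ)^m * 2^m = 1 := by
      rw [← mul_pow]; norm_num
    have key2 : v m ≤ u := by
      show (⌊u * 2^m⌋₊ : ℝ) / 2^m ≤ u
      rw [div_le_iff₀ h2p]; exact hfl
    have key1 : u - (1/2)^m ≤ v m := by
      show u - (1/2)^m ≤ (⌊u * 2^m⌋₊ : ℝ) / 2^m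
      rw [le_div_iff₀ h2p]
      nlinarith
    rw [abs_le]
    constructor
    · linarith
    · linarith
  have hvtend : Filter.Tendsto v Filter.atTop (nhds u) := by
    rw [tendsto_iff_dist_tendsto_zero]
    have hpow : Filter.Tendsto (fun m : ℕ => ((1:ℝ)/2)^m) Filter.atTop (nhds 0) :=
      tendsto_pow_atTop_nhds_zero_of_lt_one (by norm_num) (by norm_num)
    refine squeeze_zero (fun m => dist_nonneg) (fun m => ?_) hpow
    rw [Real.dist_eq]
    exact hvbound m
  have hfv : Filter.Tendsto (fun m => f (v m)) Filter.atTop (nhds (f u)) :=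
    (hf.continuousAt.tendsto).comp hvtend
  have hgv : Filter.Tendsto (fun m => f 1 ^ (v m)) Filter.atTop (nhds (f 1 ^ u)) := by
    have hrw : (fun x : ℝ => f 1 ^ x) = fun x => Real.exp (Real.log (f 1) * x) :=
      funext fun x => Real.rpow_def_of_pos hf1 x
    have hcont : Continuous (fun x : ℝ => f 1 ^ x) := by
      rw [hrw]; exact Real.continuous_exp.comp (continuous_const.mul continuous_id)
    exact (hcont.continuousAt.tendsto).comp hvtend
  exact le_of_tendsto_of_tendsto' hfv hgv (fun m => hdy m _ (hvle m))

end CordesAux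

/-- **Cordes inequality.** For positive definite symmetric real matrices `A`, `B`
and `0 ≤ u ≤ 1`, one has `‖A^u B^u‖ ≤ ‖A B‖^u` in the spectral (L2 operator) norm. -/
theorem stmt2 {n : Type*} [Fintype n] [DecidableEq n]
    {A B : Matrix n n ℝ} (hA : A.PosDef) (hB : B.PosDef)
    (u : ℝ) (hu0 : 0 ≤ u) (hu1 : u ≤ 1) :
    ‖hA.1.matrixRpow u * hB.1.matrixRpow u‖ ≤ ‖A * B‖ ^ u := by
  rcases isEmpty_or_nonempty n with hn | hn
  · haveI : Subsingleton (Matrix n n ℝ) :=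
      ⟨fun M N => by ext i j; exact (IsEmpty.false i).elim⟩
    have h0 : hA.1.matrixRpow u * hB.1.matrixRpow u = 0 := Subsingleton.elim _ _
    rw [h0, norm_zero]
    exact Real.rpow_nonneg (norm_nonneg _) u
  · set f : ℝ → ℝ := fun w => ‖hA.1.matrixRpow w * hB.1.matrixRpow w‖ with hf
    have hfpos : ∀ w, 0 < f w := by
      intro w
      rw [hf]
      simp only []
      rw [norm_pos_iff]
      exact ((CordesAux.rpowUnit hA w).isUnit.mul (CordesAux.rpowUnit hB w).isUnit).ne_zero
    have hf0 : f 0 = 1 := by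
      rw [hf]
      simp only []
      rw [CordesAux.rpow_zero' hA, CordesAux.rpow_zero' hB, one_mul, CStarRing.norm_one]
    have hf1 : f 1 = ‖A * B‖ := by
      rw [hf]
      simp only []
      rw [CordesAux.rpow_one' hA, CordesAux.rpow_one' hB]
    have hkey : ∀ s t : ℝ, f ((s+t)/2) ^ 2 ≤ f s * f t := fun s t =>
      CordesAux.cordes_key' (CordesAux.rpow_mul_rpow hA) (CordesAux.rpow_mul_rpow hB)
        (CordesAux.rpow_zero' hA) (CordesAux.rpow_zero' hB)
        (CordesAux.rpow_isHermitian hA) (CordesAux.rpow_isHermitian hB) s t _ rfl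
    have hcont : Continuous f :=
      ((CordesAux.continuous_matrixRpow hA).mul (CordesAux.continuous_matrixRpow hB)).norm
    have := CordesAux.le_rpow_of_dyadic hcont (hfpos 1)
      (CordesAux.dyadic_bound hf0 hfpos hkey) hu0 hu1
    rwa [hf1] at this
end

section
/- Let H be a real separable Hilbert space, f ∈ H, and let f_1, …, f_m and f⋄_1, …, f⋄_m be H-valued Bochner square-integrable random variables such that f_1, …, f_m are independent and E[f_j] = E[f⋄_j] for each j. Let w_1, …, w_m be nonnegative real numbers with Σ_{j=1}^m w_j = 1. Then E[‖Σ_{j=1}^m w_j f_j − f‖_H^2] ≤ Σ_{j=1}^m w_j^2 E[‖f_j − f‖_H^2] + Σ_{j=1}^m w_j E[‖f⋄_j − f‖_H^2]. (This is the abstract form of the error decomposition for distributed kernel ridge regression, where f_j is the local estimator, f⋄_j its noise-free version, f the regression function, and w_j = |D_j|/|D|.) -/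
open MeasureTheory
open scoped RealInnerProductSpace

section Aux

variable {H : Type*} [NormedAddCommGroup H] [InnerProductSpace ℝ H] [CompleteSpace H]
  {Ω : Type*} [MeasurableSpace Ω] {μ : Measure Ω}

lemma aux_integral_inner_left {X : Ω → H} (hX : Integrable X μ) (c : H) :
    ∫ ω, ⟪X ω, c⟫ ∂μ = ⟪∫ ω, X ω ∂μ, c⟫ := by
  calc ∫ ω, ⟪X ω, c⟫ ∂μ = ∫ ω, ⟪c, X ω⟫ ∂μ :=
        integral_congr_ae (Filter.Eventually.of_forall fun ω => real_inner_comm _ _)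
    _ = ⟪c, ∫ ω, X ω ∂μ⟫ := integral_inner hX c
    _ = ⟪∫ ω, X ω ∂μ, c⟫ := real_inner_comm _ _

lemma aux_integrable_inner {X Y : Ω → H} (hX : MemLp X 2 μ) (hY : MemLp Y 2 μ) :
    Integrable (fun ω => ⟪X ω, Y ω⟫) μ := by
  have h := L2.integrable_inner (𝕜 := ℝ) (hX.toLp X) (hY.toLp Y)
  refine h.congr ?_
  filter_upwards [hX.coeFn_toLp, hY.coeFn_toLp] with ω h1 h2
  rw [h1, h2]

lemma aux_indep_inner [TopologicalSpace.SeparableSpace H]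
    [MeasurableSpace H] [BorelSpace H] [IsProbabilityMeasure μ]
    {X Y : Ω → H} (h : ProbabilityTheory.IndepFun X Y μ)
    (hX : MemLp X 2 μ) (hY : MemLp Y 2 μ) :
    ∫ ω, ⟪X ω, Y ω⟫ ∂μ = ⟪∫ ω, X ω ∂μ, ∫ ω, Y ω ∂μ⟫ := by
  haveI : SecondCountableTopology H :=
    UniformSpace.secondCountable_of_separable H
  have hXm : AEMeasurable X μ := hX.aestronglyMeasurable.aemeasurable
  have hYm : AEMeasurable Y μ := hY.aestronglyMeasurable.aemeasurable
  have hmap : μ.map (fun ω => (X ω, Y ω)) = (μ.map X).prod (μ.map Y) :=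
    (ProbabilityTheory.indepFun_iff_map_prod_eq_prod_map_map hXm hYm).mp h
  have hφc : Continuous (fun p : H × H => ⟪p.1, p.2⟫) := continuous_inner
  have hIX : Integrable (fun x : H => x) (μ.map X) :=
    (integrable_map_measure aestronglyMeasurable_id hXm).mpr
      (hX.integrable one_le_two)
  have hIY : Integrable (fun x : H => x) (μ.map Y) :=
    (integrable_map_measure aestronglyMeasurable_id hYm).mpr
      (hY.integrable one_le_two)
  have hIprod : Integrable (fun p : H × H => ⟪p.1, p.2⟫) ((μ.map X).prod (μ.map Y)) := by
    refine Integrable.mono' (hIX.norm.mul_prod hIY.norm) hφc.aestronglyMeasurable ?_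
    filter_upwards with p
    exact norm_inner_le_norm _ _
  have h1 : ∫ ω, ⟪X ω, Y ω⟫ ∂μ
      = ∫ p : H × H, ⟪p.1, p.2⟫ ∂((μ.map X).prod (μ.map Y)) := by
    rw [← hmap, integral_map (hXm.prodMk hYm) hφc.aestronglyMeasurable]
  rw [h1, integral_prod _ hIprod]
  have h2 : ∀ x : H, ∫ y, ⟪x, y⟫ ∂(μ.map Y) = ⟪x, ∫ y, y ∂(μ.map Y)⟫ :=
    fun x => integral_inner hIY x
  simp_rw [h2]
  have h3 : ∫ x, ⟪x, ∫ y, y ∂(μ.map Y)⟫ ∂(μ.map X)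
      = ⟪∫ x, x ∂(μ.map X), ∫ y, y ∂(μ.map Y)⟫ :=
    aux_integral_inner_left hIX _
  rw [h3]
  congr 1
  · exact integral_map hXm aestronglyMeasurable_id
  · exact integral_map hYm aestronglyMeasurable_id

/-- variance about the mean is at most the second moment about any point -/
lemma aux_var_le [IsProbabilityMeasure μ] {X : Ω → H} (hX : MemLp X 2 μ) (c : H) :
    ∫ ω, ‖X ω - ∫ ω', X ω' ∂μ‖ ^ 2 ∂μ ≤ ∫ ω, ‖X ω - c‖ ^ 2 ∂μ := by
  set v : H := (∫ ω', X ω' ∂μ) - c with hv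
  have hXi : Integrable X μ := hX.integrable one_le_two
  have ha : MemLp (fun ω => X ω - c) 2 μ := hX.sub (memLp_const c)
  have hai : Integrable (fun ω => X ω - c) μ := ha.integrable one_le_two
  have hmean : ∫ ω, (X ω - c) ∂μ = v := by
    rw [integral_sub hXi (integrable_const c), integral_const, probReal_univ,
      one_smul]
  have hpt : ∀ ω, ‖X ω - ∫ ω', X ω' ∂μ‖ ^ 2
      = ‖X ω - c‖ ^ 2 - 2 * ⟪X ω - c, v⟫ + ‖v‖ ^ 2 := by
    intro ω
    have : X ω - ∫ ω', X ω' ∂μ = (X ω - c) - v := by rw [hv]; abel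
    rw [this, @norm_sub_sq_real]
  have hInt1 : Integrable (fun ω => ‖X ω - c‖ ^ 2) μ :=
    (memLp_two_iff_integrable_sq_norm ha.aestronglyMeasurable).mp ha
  have hInt2 : Integrable (fun ω => 2 * ⟪X ω - c, v⟫) μ :=
    (hai.inner_const v).const_mul 2
  calc ∫ ω, ‖X ω - ∫ ω', X ω' ∂μ‖ ^ 2 ∂μ
      = ∫ ω, (‖X ω - c‖ ^ 2 - 2 * ⟪X ω - c, v⟫ + ‖v‖ ^ 2) ∂μ := by
        exact integral_congr_ae (Filter.Eventually.of_forall hpt)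
    _ = ∫ ω, ‖X ω - c‖ ^ 2 ∂μ - 2 * ⟪∫ ω, (X ω - c) ∂μ, v⟫ + ‖v‖ ^ 2 := by
        have hInt12 : Integrable (fun ω => ‖X ω - c‖ ^ 2 - 2 * ⟪X ω - c, v⟫) μ :=
          hInt1.sub hInt2
        rw [integral_add hInt12 (integrable_const _), integral_sub hInt1 hInt2,
          integral_const, probReal_univ, one_smul, integral_const_mul,
          ← aux_integral_inner_left hai v]
    _ = ∫ ω, ‖X ω - c‖ ^ 2 ∂μ - ‖v‖ ^ 2 := by
        rw [hmean, real_inner_self_eq_norm_sq]; ring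
    _ ≤ ∫ ω, ‖X ω - c‖ ^ 2 ∂μ := by
        have := sq_nonneg ‖v‖; linarith

end Aux

/-- **abstract error decomposition for distributed KRR.** For `f ∈ H`,
independent square-integrable random variables `f₁, …, f_m`, square-integrable random variables
`f⋄₁, …, f⋄_m` with `E[f_j] = E[f⋄_j]`, and nonnegative weights summing to one,
`E[‖Σ w_j f_j − f‖²] ≤ Σ w_j² E[‖f_j − f‖²] + Σ w_j E[‖f⋄_j − f‖²]`. -/
theorem stmt13 {H : Type*} [NormedAddCommGroup H] [InnerProductSpace ℝ H] [CompleteSpace H]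
    [TopologicalSpace.SeparableSpace H] [MeasurableSpace H] [BorelSpace H]
    {Ω : Type*} [MeasurableSpace Ω] (μ : Measure Ω) [IsProbabilityMeasure μ]
    (m : ℕ) (f₀ : H) (f fd : Fin m → Ω → H)
    (hL2 : ∀ j, MemLp (f j) 2 μ) (hL2' : ∀ j, MemLp (fd j) 2 μ)
    (hind : ProbabilityTheory.iIndepFun f μ)
    (hmean : ∀ j, ∫ ω, f j ω ∂μ = ∫ ω, fd j ω ∂μ)
    (w : Fin m → ℝ) (hw : ∀ j, 0 ≤ w j) (hw1 : ∑ j, w j = 1) :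
    ∫ ω, ‖(∑ j, w j • f j ω) - f₀‖ ^ 2 ∂μ ≤
      ∑ j, (w j) ^ 2 * ∫ ω, ‖f j ω - f₀‖ ^ 2 ∂μ +
        ∑ j, w j * ∫ ω, ‖fd j ω - f₀‖ ^ 2 ∂μ := by
  classical
  set M : Fin m → H := fun j => ∫ ω, f j ω ∂μ with hM
  set g : Fin m → Ω → H := fun j ω => f j ω - M j with hg
  set b : H := (∑ j, w j • M j) - f₀ with hb
  have hfint : ∀ j, Integrable (f j) μ := fun j => (hL2 j).integrable one_le_two
  have hg2 : ∀ j, MemLp (g j) 2 μ := fun j => (hL2 j).sub (memLp_const _)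
  have hgint : ∀ j, Integrable (g j) μ := fun j => (hg2 j).integrable one_le_two
  have hEg : ∀ j, ∫ ω, g j ω ∂μ = 0 := by
    intro j
    rw [hg]
    simp only
    rw [integral_sub (hfint j) (integrable_const _), integral_const, probReal_univ,
      one_smul, hM, sub_self]
  -- pointwise decomposition
  have hpt : ∀ ω, (∑ j, w j • f j ω) - f₀ = (∑ j, w j • g j ω) + b := by
    intro ω
    rw [hb, hg]
    simp only [smul_sub, Finset.sum_sub_distrib]
    abel
  -- the centered sum
  set S : Ω → H := fun ω => ∑ j, w j • g j ω with hS
  have hS2 : MemLp S 2 μ := by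
    have h := memLp_finset_sum' (μ := μ) (p := 2) Finset.univ
      (fun j _ => ((hg2 j).const_smul (w j)))
    refine h.ae_eq ?_
    filter_upwards with ω
    simp [hS]
  have hSint : Integrable S μ := hS2.integrable one_le_two
  have hES : ∫ ω, S ω ∂μ = 0 := by
    show ∫ ω, ∑ j, w j • g j ω ∂μ = 0
    rw [integral_finset_sum _ (fun j _ =>
      (show Integrable (fun ω => w j • g j ω) μ from (hgint j).smul (w j)))]
    simp only [integral_smul]
    simp [hEg]
  -- expand ‖S + b‖²
  have hIS2 : Integrable (fun ω => ‖S ω‖ ^ 2) μ :=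
    (memLp_two_iff_integrable_sq_norm hS2.aestronglyMeasurable).mp hS2
  have hISb : Integrable (fun ω => 2 * ⟪S ω, b⟫) μ := (hSint.inner_const b).const_mul 2
  have hmain : ∫ ω, ‖(∑ j, w j • f j ω) - f₀‖ ^ 2 ∂μ
      = ∫ ω, ‖S ω‖ ^ 2 ∂μ + ‖b‖ ^ 2 := by
    have h1 : ∀ ω, ‖(∑ j, w j • f j ω) - f₀‖ ^ 2
        = ‖S ω‖ ^ 2 + 2 * ⟪S ω, b⟫ + ‖b‖ ^ 2 := by
      intro ω; rw [hpt ω, @norm_add_sq_real]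
    calc ∫ ω, ‖(∑ j, w j • f j ω) - f₀‖ ^ 2 ∂μ
        = ∫ ω, (‖S ω‖ ^ 2 + 2 * ⟪S ω, b⟫ + ‖b‖ ^ 2) ∂μ :=
          integral_congr_ae (Filter.Eventually.of_forall h1)
      _ = ∫ ω, ‖S ω‖ ^ 2 ∂μ + 2 * ⟪∫ ω, S ω ∂μ, b⟫ + ‖b‖ ^ 2 := by
          have hInt12 : Integrable (fun ω => ‖S ω‖ ^ 2 + 2 * ⟪S ω, b⟫) μ := hIS2.add hISb
          rw [integral_add hInt12 (integrable_const _), integral_add hIS2 hISb,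
            integral_const, probReal_univ, one_smul, integral_const_mul,
            ← aux_integral_inner_left hSint b]
      _ = ∫ ω, ‖S ω‖ ^ 2 ∂μ + ‖b‖ ^ 2 := by
          rw [hES, inner_zero_left]; ring
  -- variance part: ∫‖S‖² = Σⱼ wⱼ² ∫‖gⱼ‖²
  have hInner : ∀ i j, Integrable (fun ω => ⟪g i ω, g j ω⟫) μ :=
    fun i j => aux_integrable_inner (hg2 i) (hg2 j)
  have hzero : ∀ i j, i ≠ j → ∫ ω, ⟪g i ω, g j ω⟫ ∂μ = 0 := by
    intro i j hij
    have hindf : ProbabilityTheory.IndepFun (f i) (f j) μ :=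
      hind.indepFun hij
    have hindg : ProbabilityTheory.IndepFun (g i) (g j) μ :=
      hindf.comp (measurable_id.sub_const (M i)) (measurable_id.sub_const (M j))
    rw [aux_indep_inner hindg (hg2 i) (hg2 j), hEg i, hEg j, inner_zero_left]
  have hvar : ∫ ω, ‖S ω‖ ^ 2 ∂μ = ∑ j, (w j) ^ 2 * ∫ ω, ‖g j ω‖ ^ 2 ∂μ := by
    have h1 : ∀ ω, ‖S ω‖ ^ 2 = ∑ i, ∑ j, w i * w j * ⟪g i ω, g j ω⟫ := by
      intro ω
      rw [← real_inner_self_eq_norm_sq, hS]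
      simp only
      rw [sum_inner]
      refine Finset.sum_congr rfl (fun i _ => ?_)
      rw [inner_sum]
      refine Finset.sum_congr rfl (fun j _ => ?_)
      rw [real_inner_smul_left, real_inner_smul_right]
      ring
    calc ∫ ω, ‖S ω‖ ^ 2 ∂μ
        = ∫ ω, ∑ i, ∑ j, w i * w j * ⟪g i ω, g j ω⟫ ∂μ :=
          integral_congr_ae (Filter.Eventually.of_forall h1)
      _ = ∑ i, ∑ j, w i * w j * ∫ ω, ⟪g i ω, g j ω⟫ ∂μ := by
          rw [integral_finset_sum _ (fun i _ =>
            integrable_finset_sum _ (fun j _ => (hInner i j).const_mul _))]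
          refine Finset.sum_congr rfl (fun i _ => ?_)
          rw [integral_finset_sum _ (fun j _ => (hInner i j).const_mul _)]
          exact Finset.sum_congr rfl (fun j _ => integral_const_mul _ _)
      _ = ∑ j, (w j) ^ 2 * ∫ ω, ‖g j ω‖ ^ 2 ∂μ := by
          refine Finset.sum_congr rfl (fun i _ => ?_)
          rw [Finset.sum_eq_single i]
          · have : ∀ ω, ⟪g i ω, g i ω⟫ = ‖g i ω‖ ^ 2 :=
              fun ω => real_inner_self_eq_norm_sq _
            rw [integral_congr_ae (Filter.Eventually.of_forall this)]
            ring
          · intro j _ hji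
            rw [hzero i j (Ne.symm hji), mul_zero]
          · intro hi; exact absurd (Finset.mem_univ i) hi
  have hvar_le : ∀ j, ∫ ω, ‖g j ω‖ ^ 2 ∂μ ≤ ∫ ω, ‖f j ω - f₀‖ ^ 2 ∂μ := by
    intro j
    have := aux_var_le (hL2 j) f₀
    simpa [hg, hM] using this
  -- bias part: ‖b‖² ≤ Σⱼ wⱼ ∫‖fdⱼ − f₀‖²
  have hfdint : ∀ j, Integrable (fd j) μ := fun j => (hL2' j).integrable one_le_two
  set r : Fin m → ℝ := fun j => ∫ ω, ‖fd j ω - f₀‖ ∂μ with hr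
  have hr_nonneg : ∀ j, 0 ≤ r j := fun j => integral_nonneg (fun ω => norm_nonneg _)
  have hbias : ‖b‖ ^ 2 ≤ ∑ j, w j * ∫ ω, ‖fd j ω - f₀‖ ^ 2 ∂μ := by
    have hb' : b = ∑ j, w j • ((∫ ω, fd j ω ∂μ) - f₀) := by
      rw [hb]
      simp only [smul_sub, Finset.sum_sub_distrib]
      rw [← Finset.sum_smul, hw1, one_smul]
      congr 1
      exact Finset.sum_congr rfl (fun j _ => by rw [hM]; simp only; rw [hmean j])
    have hnorm_b : ‖b‖ ≤ ∑ j, w j * r j := by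
      rw [hb']
      refine (norm_sum_le _ _).trans ?_
      refine Finset.sum_le_sum (fun j _ => ?_)
      rw [norm_smul, Real.norm_eq_abs, abs_of_nonneg (hw j)]
      refine mul_le_mul_of_nonneg_left ?_ (hw j)
      have : (∫ ω, fd j ω ∂μ) - f₀ = ∫ ω, (fd j ω - f₀) ∂μ := by
        rw [integral_sub (hfdint j) (integrable_const _), integral_const, probReal_univ,
          one_smul]
      rw [this]
      exact norm_integral_le_integral_norm _
    have hsq : ‖b‖ ^ 2 ≤ (∑ j, w j * r j) ^ 2 := by
      have h0 : 0 ≤ ‖b‖ := norm_nonneg _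
      exact pow_le_pow_left₀ h0 hnorm_b 2
    have hCS : (∑ j, w j * r j) ^ 2 ≤ ∑ j, w j * (r j) ^ 2 := by
      have key := Finset.sum_mul_sq_le_sq_mul_sq Finset.univ
        (fun j => Real.sqrt (w j)) (fun j => Real.sqrt (w j) * r j)
      have h1 : ∀ j : Fin m, Real.sqrt (w j) * (Real.sqrt (w j) * r j) = w j * r j := by
        intro j
        rw [← mul_assoc, Real.mul_self_sqrt (hw j)]
      have h2 : ∀ j : Fin m, Real.sqrt (w j) ^ 2 = w j := fun j => Real.sq_sqrt (hw j)
      have h3 : ∀ j : Fin m, (Real.sqrt (w j) * r j) ^ 2 = w j * (r j) ^ 2 := by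
        intro j; rw [mul_pow, h2]
      simp only [h1, h2, h3] at key
      rwa [hw1, one_mul] at key
    have hJensen : ∀ j, (r j) ^ 2 ≤ ∫ ω, ‖fd j ω - f₀‖ ^ 2 ∂μ := by
      intro j
      have hmem : MemLp (fun ω => ‖fd j ω - f₀‖) 2 μ :=
        ((hL2' j).sub (memLp_const f₀)).norm
      have hv := ProbabilityTheory.variance_nonneg (fun ω => ‖fd j ω - f₀‖) μ
      rw [ProbabilityTheory.variance_eq_sub hmem] at hv
      have : (∫ ω, ‖fd j ω - f₀‖ ∂μ) ^ 2 ≤ ∫ ω, ‖fd j ω - f₀‖ ^ 2 ∂μ := by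
        have heq : (fun ω => ‖fd j ω - f₀‖) ^ 2 = fun ω => ‖fd j ω - f₀‖ ^ 2 := by
          ext ω; simp [pow_two]
        rw [heq] at hv
        linarith
      exact this
    refine hsq.trans (hCS.trans ?_)
    exact Finset.sum_le_sum (fun j _ => mul_le_mul_of_nonneg_left (hJensen j) (hw j))
  -- combine
  rw [hmain]
  have h1 : ∫ ω, ‖S ω‖ ^ 2 ∂μ ≤ ∑ j, (w j) ^ 2 * ∫ ω, ‖f j ω - f₀‖ ^ 2 ∂μ := by
    rw [hvar]
    exact Finset.sum_le_sum (fun j _ =>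
      mul_le_mul_of_nonneg_left (hvar_le j) (sq_nonneg (w j)))
  linarith [hbias]
end
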